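/- Let Φ̄ ≥ 0 and set c = (√2·Φ̄)^{1/2}. Then (1/(2π))·∫₀^{2π} [√2·Φ̄·cos²θ − (1/2)·cos(2·c·sin θ)] dθ = −1/2 + √2·Φ̄ + Σ_{j=2}^{∞} (−1)^{j+1}·2^{j/2 − 1}·Φ̄^{j}/(j!)², where the series converges absolutely. -/

import Mathlib

lemma wallis (k : ℕ) : ∏ i ∈ Finset.range k, (2*(i:ℝ)+1)/(2*i+2)
    = ((2*k).factorial : ℝ) / ((2:ℝ)^k * k.factorial)^2 := by
  induction k with
  | zero => simp
  | succ n ih =>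
    rw [Finset.prod_range_succ, ih]
    have h1 : ((2*(n+1)).factorial : ℝ) = (2*n+2) * (2*n+1) * (2*n).factorial := by
      have : 2*(n+1) = (2*n+1) + 1 := by ring
      rw [this, Nat.factorial_succ, Nat.factorial_succ]; push_cast; ring
    have h4 : (((n+1)).factorial : ℝ) = (n+1) * n.factorial := by
      rw [Nat.factorial_succ]; push_cast; ring
    have h2 : ((2*n).factorial : ℝ) ≠ 0 := by positivity
    have h3 : ((n).factorial : ℝ) ≠ 0 := by positivity
    rw [h1, h4]
    have hn1 : (n:ℝ) + 1 ≠ 0 := by positivity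
    field_simp
    ring

open Real intervalIntegral in
lemma sin_pow_two_pi (k : ℕ) : ∫ θ in (0:ℝ)..(2*π), Real.sin θ ^ (2*k)
    = 2 * (π * ∏ i ∈ Finset.range k, (2*(i:ℝ)+1)/(2*i+2)) := by
  have hint : ∀ a b : ℝ, IntervalIntegrable (fun θ => Real.sin θ ^ (2*k)) MeasureTheory.volume a b :=
    fun a b => (Real.continuous_sin.pow _).intervalIntegrable a b
  have hsplit := integral_add_adjacent_intervals (a := (0:ℝ)) (b := π) (c := 2*π)
    (hint 0 π) (hint π (2*π))
  have h2 : ∫ θ in π..(2*π), Real.sin θ ^ (2*k) = ∫ θ in (0:ℝ)..π, Real.sin θ ^ (2*k) := by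
    have h := intervalIntegral.integral_comp_add_right (a := (0:ℝ)) (b := π)
      (fun θ => Real.sin θ ^ (2*k)) π
    rw [zero_add] at h
    have hpp : π + π = 2*π := by ring
    rw [hpp] at h
    rw [← h]
    congr 1
    funext θ
    rw [Real.sin_add_pi]
    exact (Even.neg_pow ⟨k, by ring⟩ _)
  rw [← hsplit, h2, integral_sin_pow_even]
  ring

open Real intervalIntegral MeasureTheory in
lemma bessel_hasSum (c : ℝ) (hc : 0 ≤ c) :
    HasSum (fun k : ℕ => (-1:ℝ)^k * (2*c)^(2*k) / ((2*k).factorial : ℝ) *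
        ∫ θ in (0:ℝ)..(2*π), Real.sin θ ^ (2*k))
      (∫ θ in (0:ℝ)..(2*π), Real.cos (2*c*Real.sin θ)) := by
  have key := intervalIntegral.hasSum_integral_of_dominated_convergence
    (μ := volume) (a := (0:ℝ)) (b := 2*π)
    (F := fun (k : ℕ) (θ : ℝ) => (-1:ℝ)^k * (2*c*Real.sin θ)^(2*k) / ((2*k).factorial : ℝ))
    (f := fun θ => Real.cos (2*c*Real.sin θ))
    (bound := fun k _ => (2*c)^(2*k) / ((2*k).factorial : ℝ))
    (fun n => (Continuous.aestronglyMeasurable (by continuity)))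
    (fun n => by
      filter_upwards with t _
      have h1 : |2*c*Real.sin t| ≤ 2*c := by
        rw [abs_mul]
        calc |2*c| * |Real.sin t| ≤ |2*c| * 1 :=
              mul_le_mul_of_nonneg_left (Real.abs_sin_le_one t) (abs_nonneg _)
        _ = 2*c := by rw [mul_one, abs_of_nonneg (by positivity)]
      rw [Real.norm_eq_abs, abs_div, abs_mul, abs_pow, abs_pow, abs_neg, abs_one,
        one_pow, one_mul, Nat.abs_cast]
      gcongr)
    (by
      filter_upwards with t _
      have : Summable (fun n : ℕ => (2*c)^n / (n.factorial : ℝ)) :=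
        Real.summable_pow_div_factorial (2*c)
      exact this.comp_injective (fun a b h => by omega))
    (by exact _root_.intervalIntegrable_const)
    (by
      filter_upwards with t _
      exact Real.hasSum_cos (2*c*Real.sin t))
  convert key using 2 with k
  · rfl
  rw [← intervalIntegral.integral_const_mul]
  congr 1
  funext θ
  rw [mul_pow]
  ring

/-- Averaged pendulum Hamiltonian (Eq. 32): with `c = (√2·Φ̄)^{1/2}`, the average over
the fast angle of `√2·Φ̄·cos²θ − (1/2)·cos(2c·sin θ)` equals
`−1/2 + √2·Φ̄ + Σ_{j≥2} (−1)^{j+1} 2^{j/2−1} Φ̄^j/(j!)²` (absolutely convergent). -/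
theorem stmt_10 (Φb : ℝ) (hΦ : 0 ≤ Φb)
    (c : ℝ) (hc : c = Real.sqrt (Real.sqrt 2 * Φb)) :
    Summable (fun j : ℕ => |(-1:ℝ)^(j+2+1) * (2:ℝ)^(((j:ℝ)+2)/2 - 1) * Φb^(j+2) /
      (((j+2).factorial : ℝ))^2|) ∧
    (1 / (2*Real.pi)) * ∫ θ in (0:ℝ)..(2*Real.pi),
        (Real.sqrt 2 * Φb * Real.cos θ ^ 2 - (1/2) * Real.cos (2 * c * Real.sin θ)) =
      -1/2 + Real.sqrt 2 * Φb +
        ∑' j : ℕ, (-1:ℝ)^(j+2+1) * (2:ℝ)^(((j:ℝ)+2)/2 - 1) * Φb^(j+2) /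
          (((j+2).factorial : ℝ))^2 := by
  have hsq2 : (0:ℝ) ≤ Real.sqrt 2 := Real.sqrt_nonneg 2
  set x : ℝ := Real.sqrt 2 * Φb with hxdef
  have hx0 : 0 ≤ x := mul_nonneg hsq2 hΦ
  have hc0 : 0 ≤ c := hc ▸ Real.sqrt_nonneg _
  have hc2 : c^2 = x := by rw [hc]; exact Real.sq_sqrt hx0
  -- key power identity
  have hpow : ∀ j : ℕ, (2:ℝ)^(((j:ℝ)+2)/2 - 1) * Φb^(j+2) = (1/2) * x^(j+2) := by
    intro j
    have h1 : (2:ℝ)^(((j:ℝ)+2)/2 - 1) = (2:ℝ)^(((j:ℝ)+2)/2) / 2 := by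
      rw [Real.rpow_sub (by norm_num), Real.rpow_one]
    have h2 : (2:ℝ)^(((j:ℝ)+2)/2) = (Real.sqrt 2)^(j+2) := by
      rw [Real.sqrt_eq_rpow, ← Real.rpow_natCast ((2:ℝ)^((1:ℝ)/2)) (j+2),
        ← Real.rpow_mul (by norm_num)]
      congr 1
      push_cast; ring
    rw [h1, h2, hxdef, mul_pow]
    ring
  -- absolute value of the series term
  have habs : ∀ j : ℕ, |(-1:ℝ)^(j+2+1) * (2:ℝ)^(((j:ℝ)+2)/2 - 1) * Φb^(j+2) /
      (((j+2).factorial : ℝ))^2| = (1/2) * x^(j+2) / (((j+2).factorial : ℝ))^2 := by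
    intro j
    rw [abs_div, abs_mul, abs_mul, abs_pow, abs_neg, abs_one, one_pow, one_mul,
      abs_of_nonneg (Real.rpow_nonneg (by norm_num : (0:ℝ) ≤ 2) _),
      abs_of_nonneg (pow_nonneg hΦ _),
      abs_of_nonneg (by positivity : (0:ℝ) ≤ (((j+2).factorial : ℝ))^2), hpow j]
  -- summability (first conjunct)
  have hsum1 : Summable (fun j : ℕ => (1/2) * x^(j+2) / (((j+2).factorial : ℝ))) := by
    have h := Real.summable_pow_div_factorial x
    have h2 : Summable (fun j : ℕ => x^(j+2) / (((j+2).factorial : ℝ))) :=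
      (summable_nat_add_iff 2).mpr h
    have := h2.mul_left (1/2)
    exact this.congr (fun j => by ring)
  have hS : Summable (fun j : ℕ => |(-1:ℝ)^(j+2+1) * (2:ℝ)^(((j:ℝ)+2)/2 - 1) * Φb^(j+2) /
      (((j+2).factorial : ℝ))^2|) := by
    apply Summable.of_nonneg_of_le (fun j => abs_nonneg _) _ hsum1
    intro j
    rw [habs j]
    have hf1 : (1:ℝ) ≤ ((j+2).factorial : ℝ) := by
      exact_mod_cast Nat.one_le_iff_ne_zero.mpr (Nat.factorial_pos _).ne'
    have hff : ((j+2).factorial : ℝ) ≤ (((j+2).factorial : ℝ))^2 := by nlinarith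
    exact div_le_div_of_nonneg_left (by positivity) (by positivity) hff
  refine ⟨hS, ?_⟩
  -- Bessel series
  have hB := bessel_hasSum c hc0
  have hterm : ∀ k : ℕ, (-1:ℝ)^k * (2*c)^(2*k) / ((2*k).factorial : ℝ) *
      ∫ θ in (0:ℝ)..(2*Real.pi), Real.sin θ ^ (2*k)
      = (-1:ℝ)^k * x^k / ((k.factorial:ℝ))^2 * (2*Real.pi) := by
    intro k
    rw [sin_pow_two_pi, wallis]
    have hf : ((2*k).factorial : ℝ) ≠ 0 := by positivity
    have hf2 : ((k).factorial : ℝ) ≠ 0 := by positivity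
    have h2c : (2*c)^(2*k) = (2:ℝ)^(2*k) * (c^2)^k := by rw [mul_pow, ← pow_mul]
    have hsq : ((2:ℝ)^k * k.factorial)^2 = (2:ℝ)^(2*k) * (k.factorial:ℝ)^2 := by
      rw [mul_pow, ← pow_mul, mul_comm k 2]
    rw [h2c, hc2, hsq]
    have h2k : ((2:ℝ)^(2*k)) ≠ 0 := by positivity
    field_simp
  rw [funext hterm] at hB
  have hπ : (0:ℝ) < 2*Real.pi := by positivity
  -- summability of a k := (-1)^k x^k / (k!)^2
  have hsa : Summable (fun k : ℕ => (-1:ℝ)^k * x^k / ((k.factorial:ℝ))^2) := by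
    have h := hB.summable.mul_right ((2*Real.pi)⁻¹)
    exact h.congr (fun k => by field_simp; try ring)
  have hIcos : (∫ θ in (0:ℝ)..(2*Real.pi), Real.cos (2*c*Real.sin θ))
      = (∑' k : ℕ, (-1:ℝ)^k * x^k / ((k.factorial:ℝ))^2) * (2*Real.pi) := by
    rw [← hB.tsum_eq, tsum_mul_right]
  -- split the integral
  have hcont1 : Continuous (fun θ : ℝ => x * Real.cos θ ^ 2) :=
    continuous_const.mul (Real.continuous_cos.pow 2)
  have hcont2 : Continuous (fun θ : ℝ => (1/2) * Real.cos (2*c*Real.sin θ)) :=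
    continuous_const.mul (Real.continuous_cos.comp (continuous_const.mul Real.continuous_sin))
  have hsplit : (∫ θ in (0:ℝ)..(2*Real.pi),
      (x * Real.cos θ ^ 2 - (1/2) * Real.cos (2 * c * Real.sin θ)))
      = x * (∫ θ in (0:ℝ)..(2*Real.pi), Real.cos θ ^ 2)
        - (1/2) * ∫ θ in (0:ℝ)..(2*Real.pi), Real.cos (2*c*Real.sin θ) := by
    rw [intervalIntegral.integral_sub (hcont1.intervalIntegrable _ _)
      (hcont2.intervalIntegrable _ _), intervalIntegral.integral_const_mul,
      intervalIntegral.integral_const_mul]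
  have hcos2 : (∫ θ in (0:ℝ)..(2*Real.pi), Real.cos θ ^ 2) = Real.pi := by
    rw [integral_cos_sq]
    simp [Real.sin_two_pi, Real.cos_two_pi]
  -- tail of the series
  have hTsplit := Summable.sum_add_tsum_nat_add 2 hsa
  have hrange2 : ∑ i ∈ Finset.range 2, (-1:ℝ)^i * x^i / ((i.factorial:ℝ))^2 = 1 - x := by
    simp [Finset.sum_range_succ]
    ring
  -- rewrite target tsum
  have htermval : ∀ j : ℕ, (-1:ℝ)^(j+2+1) * (2:ℝ)^(((j:ℝ)+2)/2 - 1) * Φb^(j+2) /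
      (((j+2).factorial : ℝ))^2
      = (-(1:ℝ)/2) * ((-1:ℝ)^(j+2) * x^(j+2) / (((j+2).factorial:ℝ))^2) := by
    intro j
    have h := hpow j
    calc (-1:ℝ)^(j+2+1) * (2:ℝ)^(((j:ℝ)+2)/2 - 1) * Φb^(j+2) / (((j+2).factorial : ℝ))^2
        = (-1:ℝ)^(j+2+1) * ((2:ℝ)^(((j:ℝ)+2)/2 - 1) * Φb^(j+2)) / (((j+2).factorial : ℝ))^2 := by
          ring
      _ = (-1:ℝ)^(j+2+1) * ((1/2) * x^(j+2)) / (((j+2).factorial : ℝ))^2 := by rw [h]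
      _ = (-(1:ℝ)/2) * ((-1:ℝ)^(j+2) * x^(j+2) / (((j+2).factorial:ℝ))^2) := by
          rw [pow_succ]; ring
  rw [funext htermval, tsum_mul_left, hsplit, hcos2, hIcos]
  rw [hrange2] at hTsplit
  have hπne : Real.pi ≠ 0 := Real.pi_ne_zero
  rw [← hTsplit]
  field_simp
  ring
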